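/- The function F(K) := ∫₀^∞ u^{−1/2} e^{i(Ku − u³)} du is well defined (convergent as an improper integral) for every real K, and is continuous in K. -/

import Mathlib

open Real Complex Filter MeasureTheory intervalIntegral

noncomputable section FockAux

/-- phase factor -/
def fockE (K u : ℝ) : ℂ := Complex.exp (Complex.I * ((K : ℂ) * u - (u : ℂ) ^ 3))

/-- the integrand -/
def fockf (K u : ℝ) : ℂ := ((1 / Real.sqrt u : ℝ) : ℂ) * fockE K u

/-- antiderivative used for integration by parts on `[1, ∞)` -/
def fockG (K u : ℝ) : ℂ := Complex.I / 3 * fockE K u * ((u ^ (-(5/2) : ℝ) : ℝ) : ℂ)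

/-- remainder term from integration by parts -/
def fockh (K u : ℝ) : ℂ :=
  Complex.I / 3 * fockE K u *
    (Complex.I * K * ((u ^ (-(5/2) : ℝ) : ℝ) : ℂ) - 5/2 * ((u ^ (-(7/2) : ℝ) : ℝ) : ℂ))

lemma norm_fockE (K u : ℝ) : ‖fockE K u‖ = 1 := by
  have h : Complex.I * ((K : ℂ) * u - (u : ℂ) ^ 3) = ((K * u - u ^ 3 : ℝ) : ℂ) * Complex.I := by
    push_cast; ring
  rw [fockE, h, Complex.norm_exp_ofReal_mul_I]

lemma measurable_fockE (K : ℝ) : Measurable (fockE K) := by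
  unfold fockE; fun_prop

lemma measurable_fockf (K : ℝ) : Measurable (fockf K) := by
  unfold fockf fockE; fun_prop

lemma measurable_fockh (K : ℝ) : Measurable (fockh K) := by
  unfold fockh fockE; fun_prop

lemma contK_fockE (u : ℝ) : Continuous fun K => fockE K u := by
  unfold fockE; fun_prop

lemma contK_fockf (u : ℝ) : Continuous fun K => fockf K u := by
  unfold fockf fockE; fun_prop

lemma contK_fockh (u : ℝ) : Continuous fun K => fockh K u := by
  unfold fockh fockE; fun_prop

lemma hasDerivAt_fockE (K u : ℝ) :
    HasDerivAt (fockE K) (fockE K u * (Complex.I * ((K - 3 * u ^ 2 : ℝ) : ℂ))) u := by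
  have hr : HasDerivAt (fun u : ℝ => K * u - u ^ 3) (K - 3 * u ^ 2) u := by
    simpa using ((hasDerivAt_id u).const_mul K).fun_sub (hasDerivAt_pow 3 u)
  have h1 : HasDerivAt (fun u : ℝ => Complex.I * ((K * u - u ^ 3 : ℝ) : ℂ))
      (Complex.I * ((K - 3 * u ^ 2 : ℝ) : ℂ)) u := (hr.ofReal_comp).const_mul Complex.I
  have := h1.cexp
  have heq : (fun u : ℝ => Complex.exp (Complex.I * ((K * u - u ^ 3 : ℝ) : ℂ))) = fockE K := by
    funext v; unfold fockE; push_cast; ring_nf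
  rw [heq] at this
  convert this using 1
  unfold fockE; push_cast; ring_nf

lemma hasDerivAt_fockG (K : ℝ) {u : ℝ} (hu : 0 < u) :
    HasDerivAt (fockG K) (fockf K u + fockh K u) u := by
  have hp : HasDerivAt (fun u : ℝ => u ^ (-(5/2) : ℝ)) (-(5/2) * u ^ (-(7/2) : ℝ)) u := by
    have := Real.hasDerivAt_rpow_const (x := u) (p := (-(5/2) : ℝ)) (Or.inl hu.ne')
    convert this using 2
    norm_num
  have hpc : HasDerivAt (fun u : ℝ => ((u ^ (-(5/2) : ℝ) : ℝ) : ℂ))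
      (((-(5/2) * u ^ (-(7/2) : ℝ) : ℝ)) : ℂ) u := hp.ofReal_comp
  have hE := (hasDerivAt_fockE K u).const_mul (Complex.I / 3)
  have hG := hE.fun_mul hpc
  have hGfun : (fun u : ℝ => Complex.I / 3 * fockE K u * ((u ^ (-(5/2) : ℝ) : ℝ) : ℂ)) = fockG K := rfl
  rw [hGfun] at hG
  refine hG.congr_deriv ?_
  symm
  unfold fockf fockh
  have c1 : ((1 / Real.sqrt u : ℝ) : ℂ) = ((u ^ (-(1/2) : ℝ) : ℝ) : ℂ) := by
    rw [Real.sqrt_eq_rpow, Real.rpow_neg hu.le, one_div]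
  have c2 : (u : ℝ) ^ (-(1/2) : ℝ) = u ^ 2 * u ^ (-(5/2) : ℝ) := by
    rw [← Real.rpow_natCast u 2, ← Real.rpow_add hu]
    norm_num
  rw [c1, c2]
  push_cast
  ring_nf
  rw [Complex.I_sq]
  ring

lemma norm_fockf {K u : ℝ} (hu : 0 < u) : ‖fockf K u‖ = u ^ (-(1/2) : ℝ) := by
  rw [fockf, norm_mul, norm_fockE, mul_one, Complex.norm_real, Real.norm_eq_abs,
    _root_.abs_of_nonneg (by positivity), Real.sqrt_eq_rpow, Real.rpow_neg hu.le, one_div]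

lemma integrableOn_bound1 (T : ℝ) (hT : 0 ≤ T) :
    IntegrableOn (fun u : ℝ => u ^ (-(1/2) : ℝ)) (Set.Ioc 0 T) volume := by
  have := intervalIntegral.intervalIntegrable_rpow' (a := 0) (b := T) (r := (-(1/2) : ℝ))
    (by norm_num)
  rwa [intervalIntegrable_iff_integrableOn_Ioc_of_le hT] at this

lemma intervalIntegrable_fockf (K T : ℝ) (hT : 0 ≤ T) :
    IntervalIntegrable (fockf K) volume 0 T := by
  rw [intervalIntegrable_iff_integrableOn_Ioc_of_le hT]
  refine (integrableOn_bound1 T hT).mono' ((measurable_fockf K).aestronglyMeasurable) ?_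
  filter_upwards [ae_restrict_mem measurableSet_Ioc] with u hu
  rw [norm_fockf hu.1]

lemma norm_fockh_le {K u : ℝ} (hu : 1 ≤ u) :
    ‖fockh K u‖ ≤ (|K| + 5/2) / 3 * u ^ (-(5/2) : ℝ) := by
  have hu0 : (0:ℝ) < u := lt_of_lt_of_le one_pos hu
  have hb : u ^ (-(7/2) : ℝ) ≤ u ^ (-(5/2) : ℝ) :=
    Real.rpow_le_rpow_of_exponent_le hu (by norm_num)
  have hI3 : ‖(Complex.I / 3 : ℂ)‖ = 1/3 := by
    simp [map_div₀]
  rw [fockh, norm_mul, norm_mul, norm_fockE, mul_one, hI3]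
  have h2 : ‖Complex.I * K * ((u ^ (-(5/2) : ℝ) : ℝ) : ℂ) -
      5/2 * ((u ^ (-(7/2) : ℝ) : ℝ) : ℂ)‖ ≤ |K| * u ^ (-(5/2) : ℝ) + 5/2 * u ^ (-(7/2) : ℝ) := by
    refine (norm_sub_le _ _).trans ?_
    have e1 : ‖Complex.I * K * ((u ^ (-(5/2) : ℝ) : ℝ) : ℂ)‖ = |K| * u ^ (-(5/2) : ℝ) := by
      rw [norm_mul, norm_mul, Complex.norm_I, one_mul, Complex.norm_real, Complex.norm_real,
        Real.norm_eq_abs, Real.norm_eq_abs, _root_.abs_of_nonneg (Real.rpow_nonneg hu0.le _)]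
    have e2 : ‖(5/2 : ℂ) * ((u ^ (-(7/2) : ℝ) : ℝ) : ℂ)‖ = 5/2 * u ^ (-(7/2) : ℝ) := by
      rw [norm_mul, Complex.norm_real, Real.norm_eq_abs,
        _root_.abs_of_nonneg (Real.rpow_nonneg hu0.le _)]
      norm_num
    rw [e1, e2]
  calc 1/3 * ‖Complex.I * K * ((u ^ (-(5/2) : ℝ) : ℝ) : ℂ)
        - 5/2 * ((u ^ (-(7/2) : ℝ) : ℝ) : ℂ)‖
      ≤ 1/3 * (|K| * u ^ (-(5/2) : ℝ) + 5/2 * u ^ (-(7/2) : ℝ)) := by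
        exact mul_le_mul_of_nonneg_left h2 (by norm_num)
    _ ≤ 1/3 * (|K| * u ^ (-(5/2) : ℝ) + 5/2 * u ^ (-(5/2) : ℝ)) := by
        have := mul_le_mul_of_nonneg_left hb (by norm_num : (0:ℝ) ≤ 5/2)
        nlinarith
    _ = (|K| + 5/2) / 3 * u ^ (-(5/2) : ℝ) := by ring

lemma integrableOn_bound2 (C : ℝ) :
    IntegrableOn (fun u : ℝ => C * u ^ (-(5/2) : ℝ)) (Set.Ioi 1) volume :=
  (integrableOn_Ioi_rpow_of_lt (by norm_num) one_pos).const_mul C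

lemma integrableOn_fockh (K : ℝ) : IntegrableOn (fockh K) (Set.Ioi 1) volume := by
  refine (integrableOn_bound2 ((|K| + 5/2)/3)).mono'
    ((measurable_fockh K).aestronglyMeasurable) ?_
  filter_upwards [ae_restrict_mem measurableSet_Ioi] with u hu using norm_fockh_le hu.le

lemma intervalIntegrable_fockf' (K T : ℝ) (hT : 1 ≤ T) :
    IntervalIntegrable (fockf K) volume 1 T := by
  refine (intervalIntegrable_fockf K T (zero_le_one.trans hT)).mono_set ?_
  rw [Set.uIcc_of_le hT, Set.uIcc_of_le (zero_le_one.trans hT)]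
  exact Set.Icc_subset_Icc (by norm_num) le_rfl

lemma intervalIntegrable_fockh' (K T : ℝ) (hT : 1 ≤ T) :
    IntervalIntegrable (fockh K) volume 1 T := by
  rw [intervalIntegrable_iff_integrableOn_Ioc_of_le hT]
  exact (integrableOn_fockh K).mono_set Set.Ioc_subset_Ioi_self

lemma fock_ibp (K T : ℝ) (hT : 1 ≤ T) :
    ∫ u in (1:ℝ)..T, fockf K u
      = fockG K T - fockG K 1 - ∫ u in (1:ℝ)..T, fockh K u := by
  have hderiv : ∀ u ∈ Set.uIcc (1:ℝ) T, HasDerivAt (fockG K) (fockf K u + fockh K u) u := by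
    intro u hu
    rw [Set.uIcc_of_le hT] at hu
    exact hasDerivAt_fockG K (lt_of_lt_of_le one_pos hu.1)
  have hfi := intervalIntegrable_fockf' K T hT
  have hhi := intervalIntegrable_fockh' K T hT
  have h := intervalIntegral.integral_eq_sub_of_hasDerivAt hderiv (hfi.add hhi)
  rw [intervalIntegral.integral_add hfi hhi] at h
  linear_combination h

lemma tendsto_fockG (K : ℝ) : Tendsto (fun T => fockG K T) atTop (nhds 0) := by
  apply squeeze_zero_norm' (a := fun T : ℝ => 1/3 * T ^ (-(5/2) : ℝ))
  · filter_upwards [eventually_gt_atTop (0:ℝ)] with T hT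
    have hI3 : ‖(Complex.I / 3 : ℂ)‖ = 1/3 := by
      simp [map_div₀]
    rw [fockG, norm_mul, norm_mul, norm_fockE, mul_one, hI3, Complex.norm_real,
      Real.norm_eq_abs, _root_.abs_of_nonneg (Real.rpow_nonneg hT.le _)]
  · have := (tendsto_rpow_neg_atTop (y := (5/2 : ℝ)) (by norm_num)).const_mul (1/3 : ℝ)
    simpa using this

/-- the limit function -/
def fockF (K : ℝ) : ℂ :=
  (∫ u in (0:ℝ)..1, fockf K u) - fockG K 1 - ∫ u in Set.Ioi (1:ℝ), fockh K u

lemma tendsto_fockF (K : ℝ) :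
    Tendsto (fun T : ℝ => ∫ u in (0:ℝ)..T, fockf K u) atTop (nhds (fockF K)) := by
  have hA : Tendsto (fun _ : ℝ => ∫ u in (0:ℝ)..1, fockf K u) atTop
      (nhds (∫ u in (0:ℝ)..1, fockf K u)) := tendsto_const_nhds
  have hH : Tendsto (fun T : ℝ => ∫ u in (1:ℝ)..T, fockh K u) atTop
      (nhds (∫ u in Set.Ioi (1:ℝ), fockh K u)) :=
    MeasureTheory.intervalIntegral_tendsto_integral_Ioi 1 (integrableOn_fockh K) tendsto_id
  have hG := tendsto_fockG K
  have hlim : Tendsto (fun T : ℝ => (∫ u in (0:ℝ)..1, fockf K u)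
      + (fockG K T - fockG K 1 - ∫ u in (1:ℝ)..T, fockh K u)) atTop
      (nhds ((∫ u in (0:ℝ)..1, fockf K u)
        + (0 - fockG K 1 - ∫ u in Set.Ioi (1:ℝ), fockh K u))) :=
    hA.add ((hG.sub_const (fockG K 1)).sub hH)
  have hlim' : Tendsto (fun T : ℝ => (∫ u in (0:ℝ)..1, fockf K u)
      + (fockG K T - fockG K 1 - ∫ u in (1:ℝ)..T, fockh K u)) atTop (nhds (fockF K)) := by
    convert hlim using 2
    rw [fockF]; ring
  refine hlim'.congr' ?_
  filter_upwards [eventually_ge_atTop (1:ℝ)] with T hT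
  rw [← intervalIntegral.integral_add_adjacent_intervals
    (intervalIntegrable_fockf K 1 zero_le_one) (intervalIntegrable_fockf' K T hT),
    fock_ibp K T hT]

lemma continuous_A : Continuous (fun K : ℝ => ∫ u in (0:ℝ)..1, fockf K u) := by
  have heq : (fun K : ℝ => ∫ u in (0:ℝ)..1, fockf K u)
      = fun K : ℝ => ∫ u, fockf K u ∂(volume.restrict (Set.Ioc (0:ℝ) 1)) := by
    funext K; rw [intervalIntegral.integral_of_le zero_le_one]
  rw [heq]
  refine MeasureTheory.continuous_of_dominated
    (fun K => (measurable_fockf K).aestronglyMeasurable)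
    (fun K => ?_) (integrableOn_bound1 1 zero_le_one) ?_
  · filter_upwards [ae_restrict_mem measurableSet_Ioc] with u hu
    rw [norm_fockf hu.1]
  · exact Eventually.of_forall fun u => contK_fockf u

lemma continuous_C : Continuous (fun K : ℝ => ∫ u in Set.Ioi (1:ℝ), fockh K u) := by
  rw [continuous_iff_continuousAt]
  intro K₀
  refine MeasureTheory.continuousAt_of_dominated
    (Eventually.of_forall fun K => (measurable_fockh K).aestronglyMeasurable)
    ?_ (integrableOn_bound2 ((|K₀| + 1 + 5/2)/3)) ?_
  · filter_upwards [Metric.closedBall_mem_nhds K₀ zero_lt_one] with K hK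
    have hKb : |K| ≤ |K₀| + 1 := by
      rw [Metric.mem_closedBall, Real.dist_eq] at hK
      calc |K| = |(K - K₀) + K₀| := by ring_nf
        _ ≤ |K - K₀| + |K₀| := abs_add_le _ _
        _ ≤ |K₀| + 1 := by linarith
    filter_upwards [ae_restrict_mem measurableSet_Ioi] with u hu
    refine (norm_fockh_le hu.le).trans ?_
    have hru : (0:ℝ) ≤ u ^ (-(5/2) : ℝ) := Real.rpow_nonneg (zero_lt_one.trans hu).le _
    have : (|K| + 5/2)/3 ≤ (|K₀| + 1 + 5/2)/3 := by linarith
    exact mul_le_mul_of_nonneg_right this hru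
  · exact Eventually.of_forall fun u => (contK_fockh u).continuousAt

lemma continuous_fockF : Continuous fockF := by
  have hG1 : Continuous (fun K : ℝ => fockG K 1) := by
    unfold fockG fockE; fun_prop
  exact (continuous_A.sub hG1).sub continuous_C

end FockAux

/-- **Well-posedness of the Fock integral `F(K) = ∫₀^∞ u^{−1/2}e^{i(Ku−u³)}du`.**
There is a continuous function `F : ℝ → ℂ` such that for every real `K` the
truncated integrals `∫₀^T u^{−1/2} e^{i(Ku − u³)} du` converge to `F K` as
`T → ∞`; i.e. the oscillatory improper integral converges for every `K` and
depends continuously on `K`. -/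
theorem fock_integral_wellDefined_continuous :
    ∃ F : ℝ → ℂ, Continuous F ∧ ∀ K : ℝ,
      Tendsto
        (fun T : ℝ => ∫ u in (0:ℝ)..T,
          ((1 / Real.sqrt u : ℝ) : ℂ) *
            Complex.exp (Complex.I * ((K:ℂ) * (u:ℂ) - (u:ℂ) ^ 3)))
        atTop (nhds (F K)) := by
  exact ⟨fockF, continuous_fockF, fun K => tendsto_fockF K⟩
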